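/- Every bijection v : Fin 81 → (Fin 4 → Fin 3) satisfying hammingDist (v i) (v (i+k)) ≥ 5 − k for all indices i and all k with 1 ≤ k ≤ 3 and i + k < 81 must in fact satisfy, for every index i and every s with 1 ≤ s ≤ 3 and i + s < 81, hammingDist (v i) (v (i+s)) = 5 − s; that is, v i and v (i+s) share exactly s − 1 coordinates. -/

import Mathlib

lemma pigeon6 : ∀ f : Fin 4 → Fin 3,
    ((if f 0 ≠ f 1 then 1 else 0) + (if f 0 ≠ f 2 then 1 else 0) +
     (if f 0 ≠ f 3 then 1 else 0) + (if f 1 ≠ f 2 then 1 else 0) +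
     (if f 1 ≠ f 3 then 1 else 0) + (if f 2 ≠ f 3 then 1 else 0) : ℕ) ≤ 5 := by
  decide

lemma ham_eq_sum (x y : Fin 4 → Fin 3) :
    hammingDist x y = ∑ c : Fin 4, if x c ≠ y c then 1 else 0 := by
  rw [hammingDist, Finset.card_filter]

lemma key16 (v : Fin 81 → Fin 4 → Fin 3)
    (hrad : ∀ i k : ℕ, 1 ≤ k → k ≤ 3 → (h : i + k < 81) →
      hammingDist (v ⟨i, Nat.lt_of_le_of_lt (Nat.le_add_right i k) h⟩) (v ⟨i + k, h⟩) ≥ 5 - k)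
    (j : ℕ) (h3 : j + 3 < 81) :
    hammingDist (v ⟨j, by omega⟩) (v ⟨j + 1, by omega⟩) = 4 ∧
    hammingDist (v ⟨j, by omega⟩) (v ⟨j + 2, by omega⟩) = 3 ∧
    hammingDist (v ⟨j, by omega⟩) (v ⟨j + 3, by omega⟩) = 2 ∧
    hammingDist (v ⟨j + 1, by omega⟩) (v ⟨j + 2, by omega⟩) = 4 ∧
    hammingDist (v ⟨j + 1, by omega⟩) (v ⟨j + 3, by omega⟩) = 3 ∧
    hammingDist (v ⟨j + 2, by omega⟩) (v ⟨j + 3, by omega⟩) = 4 := by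
  set w0 := v ⟨j, by omega⟩ with hw0
  set w1 := v ⟨j + 1, by omega⟩ with hw1
  set w2 := v ⟨j + 2, by omega⟩ with hw2
  set w3 := v ⟨j + 3, by omega⟩ with hw3
  have h01 : hammingDist w0 w1 ≥ 4 := hrad j 1 (by norm_num) (by norm_num) (by omega)
  have h02 : hammingDist w0 w2 ≥ 3 := hrad j 2 (by norm_num) (by norm_num) (by omega)
  have h03 : hammingDist w0 w3 ≥ 2 := hrad j 3 (by norm_num) (by norm_num) (by omega)
  have h12 : hammingDist w1 w2 ≥ 4 := hrad (j + 1) 1 (by norm_num) (by norm_num) (by omega)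
  have h13 : hammingDist w1 w3 ≥ 3 := hrad (j + 1) 2 (by norm_num) (by norm_num) (by omega)
  have h23 : hammingDist w2 w3 ≥ 4 := hrad (j + 2) 1 (by norm_num) (by norm_num) (by omega)
  have hsum : hammingDist w0 w1 + hammingDist w0 w2 + hammingDist w0 w3 +
      hammingDist w1 w2 + hammingDist w1 w3 + hammingDist w2 w3 ≤ 20 := by
    simp only [ham_eq_sum, ← Finset.sum_add_distrib]
    calc (∑ c : Fin 4, ((if w0 c ≠ w1 c then 1 else 0) + (if w0 c ≠ w2 c then 1 else 0) +
          (if w0 c ≠ w3 c then 1 else 0) + (if w1 c ≠ w2 c then 1 else 0) +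
          (if w1 c ≠ w3 c then 1 else 0) + (if w2 c ≠ w3 c then 1 else 0)))
        ≤ ∑ _c : Fin 4, 5 := by
          apply Finset.sum_le_sum
          intro c _
          exact pigeon6 (fun t => (![w0, w1, w2, w3] t) c)
      _ = 20 := by simp
  omega

theorem stmt_16 (v : Fin 81 → Fin 4 → Fin 3) (hbij : Function.Bijective v)
    (hrad : ∀ i k : ℕ, 1 ≤ k → k ≤ 3 → (h : i + k < 81) →
      hammingDist (v ⟨i, by omega⟩) (v ⟨i + k, h⟩) ≥ 5 - k) :
    ∀ i s : ℕ, 1 ≤ s → s ≤ 3 → (h : i + s < 81) →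
      hammingDist (v ⟨i, by omega⟩) (v ⟨i + s, h⟩) = 5 - s := by
  intro i s hs1 hs3 h
  interval_cases s
  · -- s = 1
    have h1 := hrad i 1 (by norm_num) (by norm_num) h
    have h2 : hammingDist (v ⟨i, by omega⟩) (v ⟨i + 1, h⟩) ≤ 4 := by
      simpa using hammingDist_le_card_fintype (x := v ⟨i, by omega⟩) (y := v ⟨i + 1, h⟩)
    omega
  · -- s = 2
    by_cases hi : i + 3 < 81
    · exact (key16 v hrad i hi).2.1
    · have hi78 : i = 78 := by omega
      subst hi78
      exact (key16 v hrad 77 (by omega)).2.2.2.2.1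
  · -- s = 3
    exact (key16 v hrad i h).2.2.1
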